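/- For every integer t ≥ 1, the 3×3 real symmetric matrix Q = [[1, √t, 0], [√t, t+1, 1], [0, 1, 2]] has three eigenvalues y_1 > y_2 > y_3 satisfying: 2 < y_1 < t + 2 + 1/(4t); 3/2 < y_2 < 2; y_3 < 1, with y_3 > 0.19 if t = 1 and y_3 > 1/(4t) if t ≥ 2; and y_1 + y_2 = t + 4 − y_3. Furthermore, the second largest eigenvalue y_2 is strictly increasing as a function of t. -/
import Mathlib

namespace LapPaper

/-- The matrix `Q` associated with a branch of type 2 having `t` leaves. -/
noncomputable def Qmat (t : ℕ) : Matrix (Fin 3) (Fin 3) ℝ :=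
  !![(1 : ℝ), Real.sqrt t, 0; Real.sqrt t, (t : ℝ) + 1, 1; 0, 1, 2]

lemma eval_Q (t : ℕ) (a : ℝ) :
    ((Qmat t).charpoly).eval a = a^3 - ((t:ℝ)+4)*a^2 + (2*t+4)*a - 1 := by
  rw [Matrix.charpoly, Matrix.det_fin_three]
  simp [Matrix.charmatrix_apply, Qmat, Polynomial.eval_mul, Matrix.one_apply]
  ring_nf

lemma factored (t : ℕ) (y1 y2 y3 : ℝ)
    (hroots : (Matrix.charpoly (Qmat t)).roots = {y1, y2, y3}) (a : ℝ) :
    (a - y1) * (a - y2) * (a - y3) = a^3 - ((t:ℝ)+4)*a^2 + (2*t+4)*a - 1 := by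
  have hm : (Matrix.charpoly (Qmat t)).Monic := Matrix.charpoly_monic _
  have hd : (Matrix.charpoly (Qmat t)).natDegree = 3 := by
    simp [Matrix.charpoly_natDegree_eq_dim (Qmat t)]
  have hcard : Multiset.card (Matrix.charpoly (Qmat t)).roots
      = (Matrix.charpoly (Qmat t)).natDegree := by
    rw [hroots, hd]; rfl
  have hfac := Polynomial.prod_multiset_X_sub_C_of_monic_of_roots_card_eq hm hcard
  have := congrArg (Polynomial.eval a) hfac
  rw [hroots] at this
  simp [Polynomial.eval_multiset_prod] at this
  rw [← eval_Q t a, ← this]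
  ring

lemma sgn_neg {y1 y2 y3 a : ℝ} (h12 : y2 < y1) (h23 : y3 < y2)
    (h : (a - y1) * (a - y2) * (a - y3) < 0) : (y2 < a ∧ a < y1) ∨ a < y3 := by
  rcases lt_or_ge a y3 with h' | h'
  · right; exact h'
  left
  rcases le_or_gt a y2 with h2 | h2
  · exfalso
    nlinarith [mul_nonneg (mul_nonneg (show (0:ℝ) ≤ y1 - a by linarith)
      (show (0:ℝ) ≤ y2 - a by linarith)) (show (0:ℝ) ≤ a - y3 by linarith)]
  rcases lt_or_ge a y1 with h1 | h1
  · exact ⟨h2, h1⟩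
  · exfalso
    nlinarith [mul_nonneg (mul_nonneg (show (0:ℝ) ≤ a - y1 by linarith)
      (show (0:ℝ) ≤ a - y2 by linarith)) (show (0:ℝ) ≤ a - y3 by linarith)]

lemma sgn_pos {y1 y2 y3 a : ℝ} (h12 : y2 < y1) (h23 : y3 < y2)
    (h : 0 < (a - y1) * (a - y2) * (a - y3)) : y1 < a ∨ (y3 < a ∧ a < y2) := by
  rcases lt_or_ge y1 a with h' | h'
  · left; exact h'
  right
  rcases le_or_gt a y3 with h3 | h3
  · exfalso
    nlinarith [mul_nonneg (mul_nonneg (show (0:ℝ) ≤ y1 - a by linarith)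
      (show (0:ℝ) ≤ y2 - a by linarith)) (show (0:ℝ) ≤ y3 - a by linarith)]
  rcases lt_or_ge a y2 with h2 | h2
  · exact ⟨h3, h2⟩
  · exfalso
    nlinarith [mul_nonneg (mul_nonneg (show (0:ℝ) ≤ y1 - a by linarith)
      (show (0:ℝ) ≤ a - y2 by linarith)) (show (0:ℝ) ≤ a - y3 by linarith)]

lemma basic_bounds (t : ℕ) (ht : 1 ≤ t) (y1 y2 y3 : ℝ)
    (hroots : (Matrix.charpoly (Qmat t)).roots = {y1, y2, y3})
    (h12 : y2 < y1) (h23 : y3 < y2) :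
    2 < y1 ∧ 3 / 2 < y2 ∧ y2 < 2 ∧ 0 < y3 ∧ y3 < 1 := by
  have E := factored t y1 y2 y3 hroots
  have htR : (1:ℝ) ≤ t := by exact_mod_cast ht
  have hneg2 : ((2:ℝ) - y1) * (2 - y2) * (2 - y3) < 0 := by
    have h := E 2; linarith
  have hpos32 : 0 < ((3/2:ℝ) - y1) * (3/2 - y2) * (3/2 - y3) := by
    have h := E (3/2); nlinarith
  have hpos1 : 0 < ((1:ℝ) - y1) * (1 - y2) * (1 - y3) := by
    have h := E 1; nlinarith
  have hneg0 : ((0:ℝ) - y1) * (0 - y2) * (0 - y3) < 0 := by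
    have h := E 0; linarith
  rcases sgn_neg h12 h23 hneg2 with ⟨h2a, h2b⟩ | h2c
  · rcases sgn_pos h12 h23 hpos32 with h3a | ⟨h3b, h3c⟩
    · exfalso; linarith
    · refine ⟨h2b, h3c, h2a, ?_, ?_⟩
      · rcases sgn_neg h12 h23 hneg0 with ⟨h0a, _⟩ | h0c
        · exfalso; linarith
        · linarith
      · rcases sgn_pos h12 h23 hpos1 with h1a | ⟨_, h1c⟩
        · exfalso; linarith
        · linarith
  · exfalso
    rcases sgn_pos h12 h23 hpos32 with h3a | ⟨h3b, h3c⟩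
    · rcases sgn_neg h12 h23 hneg0 with ⟨h0a, _⟩ | h0c <;> linarith
    · linarith

/-- For every integer `t ≥ 1`, the eigenvalues `y₁ > y₂ > y₃` of the matrix
`Q = [[1, √t, 0], [√t, t+1, 1], [0, 1, 2]]` satisfy `2 < y₁ < t + 2 + 1/(4t)`,
`3/2 < y₂ < 2`, `y₃ < 1` with `y₃ > 0.19` for `t = 1` and `y₃ > 1/(4t)` for `t ≥ 2`, and
`y₁ + y₂ = t + 4 - y₃`. Moreover, the second eigenvalue `y₂` increases as `t` increases. -/
theorem eigenvalues_Q_matrix (t : ℕ) (ht : 1 ≤ t) (y1 y2 y3 : ℝ)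
    (hroots : (Matrix.charpoly (Qmat t)).roots = {y1, y2, y3})
    (h12 : y2 < y1) (h23 : y3 < y2) :
    (2 < y1 ∧ y1 < (t : ℝ) + 2 + 1 / (4 * t)) ∧
    (3 / 2 < y2 ∧ y2 < 2) ∧
    (y3 < 1 ∧ (t = 1 → 0.19 < y3) ∧ (2 ≤ t → 1 / (4 * (t : ℝ)) < y3)) ∧
    y1 + y2 = (t : ℝ) + 4 - y3 ∧
    (∀ t' : ℕ, t < t' → ∀ y1' y2' y3' : ℝ,
      (Matrix.charpoly (Qmat t')).roots = {y1', y2', y3'} →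
      y2' < y1' → y3' < y2' → y2 < y2') := by
  have E := factored t y1 y2 y3 hroots
  have htR : (1:ℝ) ≤ t := by exact_mod_cast ht
  have htpos : (0:ℝ) < t := by linarith
  obtain ⟨hy1, hy2a, hy2b, hy3a, hy3b⟩ := basic_bounds t ht y1 y2 y3 hroots h12 h23
  -- upper bound on y1
  have hub : y1 < (t : ℝ) + 2 + 1 / (4 * t) := by
    set u : ℝ := (t : ℝ) + 2 + 1 / (4 * t) with hu
    have hupos : 0 < (u - y1) * (u - y2) * (u - y3) := by
      rw [E u]
      have hform : u^3 - ((t:ℝ)+4)*u^2 + (2*(t:ℝ)+4)*u - 1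
          = (4*(t:ℝ)^2 - 4*(t:ℝ) - 1)^2 / (64*(t:ℝ)^3) := by
        rw [hu]; field_simp; ring
      rw [hform]
      apply div_pos
      · rcases Nat.lt_or_ge t 2 with h2 | h2
        · interval_cases t
          · norm_num
        · have h2R : (2:ℝ) ≤ t := by exact_mod_cast h2
          have h7 : (7:ℝ) ≤ 4*(t:ℝ)^2 - 4*(t:ℝ) - 1 := by nlinarith
          nlinarith [mul_nonneg (show (0:ℝ) ≤ 4*(t:ℝ)^2 - 4*(t:ℝ) - 1 - 7 by linarith)
            (show (0:ℝ) ≤ 4*(t:ℝ)^2 - 4*(t:ℝ) - 1 + 7 by linarith)]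
      · positivity
    rcases sgn_pos h12 h23 hupos with h | ⟨_, h⟩
    · exact h
    · exfalso
      have : (3:ℝ) ≤ u := by
        rw [hu]
        have : 0 < 1 / (4*(t:ℝ)) := by positivity
        linarith
      linarith
  -- lower bounds on y3
  have hlow1 : t = 1 → 0.19 < y3 := by
    intro h1
    subst h1
    have hneg : ((0.19:ℝ) - y1) * (0.19 - y2) * (0.19 - y3) < 0 := by
      have h := E 0.19; norm_num at h ⊢; nlinarith
    rcases sgn_neg h12 h23 hneg with ⟨h, _⟩ | h
    · exfalso; linarith
    · linarith
  have hlow2 : 2 ≤ t → 1 / (4 * (t : ℝ)) < y3 := by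
    intro h2
    have h2R : (2:ℝ) ≤ t := by exact_mod_cast h2
    set a : ℝ := 1 / (4 * t) with ha
    have hneg : (a - y1) * (a - y2) * (a - y3) < 0 := by
      rw [E a]
      have hform : a^3 - ((t:ℝ)+4)*a^2 + (2*(t:ℝ)+4)*a - 1
          = (-32*(t:ℝ)^3 + 60*(t:ℝ)^2 - 16*(t:ℝ) + 1) / (64*(t:ℝ)^3) := by
        rw [ha]; field_simp; ring
      rw [hform]
      apply div_neg_of_neg_of_pos
      · nlinarith [mul_nonneg (sub_nonneg.2 h2R) (sq_nonneg (t:ℝ))]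
      · positivity
    rcases sgn_neg h12 h23 hneg with ⟨h, _⟩ | h
    · exfalso
      have : a ≤ 1 := by rw [ha]; rw [div_le_one (by positivity)]; linarith
      linarith
    · linarith
  -- sum identity
  have hsum : y1 + y2 = (t : ℝ) + 4 - y3 := by
    linear_combination (E 1) - (E 2)/2 - (E 0)/2
  refine ⟨⟨hy1, hub⟩, ⟨hy2a, hy2b⟩, ⟨hy3b, hlow1, hlow2⟩, hsum, ?_⟩
  -- monotonicity
  intro t' htt' y1' y2' y3' hroots' h12' h23'
  have ht' : 1 ≤ t' := le_trans ht (le_of_lt htt')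
  have E' := factored t' y1' y2' y3' hroots'
  obtain ⟨hy1', hy2a', hy2b', hy3a', hy3b'⟩ :=
    basic_bounds t' ht' y1' y2' y3' hroots' h12' h23'
  have httR : (t:ℝ) + 1 ≤ (t':ℝ) := by exact_mod_cast htt'
  have hz : (y2 - y1) * (y2 - y2) * (y2 - y3) = 0 := by ring
  have hEy2 := E y2
  have hE'y2 := E' y2
  have hpos : 0 < (y2 - y1') * (y2 - y2') * (y2 - y3') := by
    rw [hE'y2]
    have h0 : y2^3 - ((t:ℝ)+4)*y2^2 + (2*(t:ℝ)+4)*y2 - 1 = 0 := by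
      rw [← hEy2]; ring
    nlinarith [mul_pos (show (0:ℝ) < y2 by linarith) (show (0:ℝ) < 2 - y2 by linarith),
      mul_nonneg (show (0:ℝ) ≤ (t':ℝ) - (t:ℝ) - 1 by linarith)
        (le_of_lt (mul_pos (show (0:ℝ) < y2 by linarith) (show (0:ℝ) < 2 - y2 by linarith)))]
  rcases sgn_pos h12' h23' hpos with h | ⟨_, h⟩
  · exfalso; linarith
  · exact h

end LapPaper
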